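/- On the flat circle with uniform measure and linearly decaying similarity g(x,y) = max(0, 1 - d(x,y)/ε) with ε ∈ (0,1/2], the 2-item similarity test success probability equals 1/2 + b - (3/2 - log 2)·b², where b = 2ε. -/

import Mathlib

open MeasureTheory

/-- Distance on the flat circle `[0,1)`. -/
noncomputable def circleDist (x y : ℝ) : ℝ := min |x - y| (1 - |x - y|)

/-- Linearly decaying similarity function with resolution `ε` on the flat circle. -/
noncomputable def glin (ε x y : ℝ) : ℝ := max 0 (1 - circleDist x y / ε)

/-- Probability of picking the first item, with the convention `0/(0+0) = 1/2`. -/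
noncomputable def decFirst (ε x₁ x₂ p : ℝ) : ℝ :=
  if glin ε x₁ p + glin ε x₂ p = 0 then 1/2
  else glin ε x₁ p / (glin ε x₁ p + glin ε x₂ p)

/-- Probability of picking the item closest to the probe `p`. -/
noncomputable def simSucc (ε x₁ x₂ p : ℝ) : ℝ :=
  if circleDist x₁ p < circleDist x₂ p then decFirst ε x₁ x₂ p
  else if circleDist x₂ p < circleDist x₁ p then decFirst ε x₂ x₁ p
  else 1

open MeasureTheory intervalIntegral Set

noncomputable def Gl (ε s : ℝ) : ℝ := max 0 (1 - s / ε)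
noncomputable def dF (ε s t : ℝ) : ℝ :=
  if Gl ε s + Gl ε t = 0 then 1/2 else Gl ε s / (Gl ε s + Gl ε t)
noncomputable def score (ε s t : ℝ) : ℝ :=
  if s < t then dF ε s t else if t < s then dF ε t s else 1

lemma simSucc_eq (ε x₁ x₂ p : ℝ) :
    simSucc ε x₁ x₂ p = score ε (circleDist x₁ p) (circleDist x₂ p) := rfl

lemma Gl_nonneg (ε s : ℝ) : 0 ≤ Gl ε s := le_max_left _ _

lemma Gl_pos {ε s : ℝ} (hε : 0 < ε) (h0 : 0 ≤ s) (h : s < ε) : 0 < Gl ε s := by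
  have : 0 < 1 - s / ε := by
    have := (div_lt_one hε).mpr h; linarith
  exact lt_of_lt_of_le this (le_max_right _ _)

lemma Gl_eq_zero {ε s : ℝ} (hε : 0 < ε) (h : ε ≤ s) : Gl ε s = 0 := by
  have : 1 - s / ε ≤ 0 := by
    have := (one_le_div hε).mpr h; linarith
  exact max_eq_left this

lemma Gl_eq {ε s : ℝ} (hε : 0 < ε) (h : s ≤ ε) : Gl ε s = 1 - s / ε := by
  have : 0 ≤ 1 - s / ε := by
    have := (div_le_one hε).mpr h; linarith
  exact max_eq_right this

lemma dF_nonneg (ε s t : ℝ) : 0 ≤ dF ε s t := by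
  unfold dF; split
  · norm_num
  · exact div_nonneg (Gl_nonneg ε s) (add_nonneg (Gl_nonneg ε s) (Gl_nonneg ε t))

lemma dF_le_one (ε s t : ℝ) : dF ε s t ≤ 1 := by
  unfold dF; split
  · norm_num
  · exact div_le_one_of_le₀ (le_add_of_nonneg_right (Gl_nonneg ε t))
      (add_nonneg (Gl_nonneg ε s) (Gl_nonneg ε t))

lemma score_nonneg (ε s t : ℝ) : 0 ≤ score ε s t := by
  unfold score; split
  · exact dF_nonneg ε s t
  · split
    · exact dF_nonneg ε t s
    · norm_num

lemma score_le_one (ε s t : ℝ) : score ε s t ≤ 1 := by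
  unfold score; split
  · exact dF_le_one ε s t
  · split
    · exact dF_le_one ε t s
    · exact le_refl 1

lemma score_norm (ε s t : ℝ) : ‖score ε s t‖ ≤ 1 := by
  rw [Real.norm_eq_abs, abs_le]
  exact ⟨by linarith [score_nonneg ε s t], score_le_one ε s t⟩

lemma continuous_Gl (ε : ℝ) : Continuous (Gl ε) :=
  continuous_const.max (continuous_const.sub (continuous_id.div_const ε))

lemma measurable_score (ε : ℝ) : Measurable fun q : ℝ × ℝ => score ε q.1 q.2 := by
  have hG1 : Measurable fun q : ℝ × ℝ => Gl ε q.1 :=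
    ((continuous_Gl ε).comp continuous_fst).measurable
  have hG2 : Measurable fun q : ℝ × ℝ => Gl ε q.2 :=
    ((continuous_Gl ε).comp continuous_snd).measurable
  have hdF : Measurable fun q : ℝ × ℝ => dF ε q.1 q.2 := by
    unfold dF
    exact Measurable.ite (measurableSet_eq_fun (hG1.add hG2) measurable_const)
      measurable_const (hG1.div (hG1.add hG2))
  have hdF' : Measurable fun q : ℝ × ℝ => dF ε q.2 q.1 :=
    hdF.comp (measurable_snd.prodMk measurable_fst)
  unfold score
  exact Measurable.ite (measurableSet_lt measurable_fst measurable_snd) hdF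
    (Measurable.ite (measurableSet_lt measurable_snd measurable_fst) hdF' measurable_const)

lemma measurable_score_right (ε s : ℝ) : Measurable fun t : ℝ => score ε s t :=
  (measurable_score ε).comp (measurable_const.prodMk measurable_id)

lemma bdd_ii {f : ℝ → ℝ} (hm : Measurable f) (hb : ∀ x, ‖f x‖ ≤ 1) (a b : ℝ) :
    IntervalIntegrable f volume a b := by
  rw [intervalIntegrable_iff]
  exact Measure.integrableOn_of_bounded measure_Ioc_lt_top.ne hm.aestronglyMeasurable
    (Filter.Eventually.of_forall hb)

lemma score_ii (ε s a b : ℝ) : IntervalIntegrable (score ε s) volume a b :=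
  bdd_ii (measurable_score_right ε s) (fun t => score_norm ε s t) a b

lemma circle_subst {p : ℝ} (hp0 : 0 ≤ p) (hp1 : p < 1) {f : ℝ → ℝ}
    (hm : Measurable f) (hb : ∀ x, ‖f x‖ ≤ 1) :
    ∫ x in Ico (0:ℝ) 1, f (circleDist x p) = 2 * ∫ t in (0:ℝ)..(1/2), f t := by
  have hcd : Continuous fun x : ℝ => circleDist x p :=
    ((continuous_id.sub continuous_const).abs).min
      (continuous_const.sub (continuous_id.sub continuous_const).abs)
  have hb' : ∀ x, ‖f (circleDist x p)‖ ≤ 1 := fun x => hb _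
  have hII : ∀ a b : ℝ, IntervalIntegrable (fun x => f (circleDist x p)) volume a b :=
    bdd_ii (hm.comp hcd.measurable) hb'
  have fII : ∀ a b : ℝ, IntervalIntegrable f volume a b := bdd_ii hm hb
  have h0 : ∫ x in Ico (0:ℝ) 1, f (circleDist x p)
      = ∫ x in (0:ℝ)..1, f (circleDist x p) := by
    rw [setIntegral_congr_set Ico_ae_eq_Ioc, intervalIntegral.integral_of_le (by norm_num)]
  rw [h0]
  rcases le_or_gt p (1/2) with hple | hpgt
  · -- p ≤ 1/2 : split at p and p + 1/2
    have e2 := integral_add_adjacent_intervals (hII 0 (p + 1/2)) (hII (p + 1/2) 1)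
    have e1 := integral_add_adjacent_intervals (hII 0 p) (hII p (p + 1/2))
    have pc1 : ∫ x in (0:ℝ)..p, f (circleDist x p) = ∫ x in (0:ℝ)..p, f x := by
      have : ∫ x in (0:ℝ)..p, f (circleDist x p) = ∫ x in (0:ℝ)..p, f (p - x) := by
        apply integral_congr
        intro x hx
        rw [uIcc_of_le hp0] at hx
        obtain ⟨h1, h2⟩ := hx
        show f (circleDist x p) = f (p - x)
        simp only [circleDist]
        rw [abs_sub_comm, abs_of_nonneg (by linarith), min_eq_left (by linarith)]
      rw [this, integral_comp_sub_left f p, sub_self, sub_zero]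
    have pc2 : ∫ x in p..(p + 1/2), f (circleDist x p)
        = ∫ x in (0:ℝ)..(1/2), f x := by
      have : ∫ x in p..(p + 1/2), f (circleDist x p)
          = ∫ x in p..(p + 1/2), f (x - p) := by
        apply integral_congr
        intro x hx
        rw [uIcc_of_le (by linarith)] at hx
        obtain ⟨h1, h2⟩ := hx
        show f (circleDist x p) = f (x - p)
        simp only [circleDist]
        rw [abs_of_nonneg (by linarith), min_eq_left (by linarith)]
      rw [this, integral_comp_sub_right f p, sub_self, add_sub_cancel_left]
    have pc3 : ∫ x in (p + 1/2)..1, f (circleDist x p)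
        = ∫ x in p..(1/2), f x := by
      have : ∫ x in (p + 1/2)..1, f (circleDist x p)
          = ∫ x in (p + 1/2)..1, f (1 + p - x) := by
        apply integral_congr
        intro x hx
        rw [uIcc_of_le (by linarith)] at hx
        obtain ⟨h1, h2⟩ := hx
        show f (circleDist x p) = f (1 + p - x)
        simp only [circleDist]
        rw [abs_of_nonneg (by linarith), min_eq_right (by linarith)]
        congr 1; ring
      rw [this, integral_comp_sub_left f (1 + p)]
      have h1 : 1 + p - 1 = p := by ring
      have h2 : 1 + p - (p + 1/2) = 1/2 := by ring
      rw [h1, h2]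
    have e3 := integral_add_adjacent_intervals (fII 0 p) (fII p (1/2))
    rw [← e2, ← e1, pc1, pc2, pc3]
    linarith
  · -- p > 1/2 : split at p - 1/2 and p
    have e2 := integral_add_adjacent_intervals (hII 0 p) (hII p 1)
    have e1 := integral_add_adjacent_intervals (hII 0 (p - 1/2)) (hII (p - 1/2) p)
    have pc1 : ∫ x in (0:ℝ)..(p - 1/2), f (circleDist x p)
        = ∫ x in (1 - p)..(1/2), f x := by
      have : ∫ x in (0:ℝ)..(p - 1/2), f (circleDist x p)
          = ∫ x in (0:ℝ)..(p - 1/2), f (x - (p - 1)) := by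
        apply integral_congr
        intro x hx
        rw [uIcc_of_le (by linarith)] at hx
        obtain ⟨h1, h2⟩ := hx
        show f (circleDist x p) = f (x - (p - 1))
        simp only [circleDist]
        rw [abs_sub_comm, abs_of_nonneg (by linarith), min_eq_right (by linarith)]
        congr 1; ring
      rw [this, integral_comp_sub_right f (p - 1)]
      have h1 : 0 - (p - 1) = 1 - p := by ring
      have h2 : p - 1/2 - (p - 1) = 1/2 := by ring
      rw [h1, h2]
    have pc2 : ∫ x in (p - 1/2)..p, f (circleDist x p)
        = ∫ x in (0:ℝ)..(1/2), f x := by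
      have : ∫ x in (p - 1/2)..p, f (circleDist x p)
          = ∫ x in (p - 1/2)..p, f (p - x) := by
        apply integral_congr
        intro x hx
        rw [uIcc_of_le (by linarith)] at hx
        obtain ⟨h1, h2⟩ := hx
        show f (circleDist x p) = f (p - x)
        simp only [circleDist]
        rw [abs_sub_comm, abs_of_nonneg (by linarith), min_eq_left (by linarith)]
      rw [this, integral_comp_sub_left f p, sub_self]
      have h1 : p - (p - 1/2) = 1/2 := by ring
      rw [h1]
    have pc3 : ∫ x in p..1, f (circleDist x p) = ∫ x in (0:ℝ)..(1 - p), f x := by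
      have : ∫ x in p..1, f (circleDist x p) = ∫ x in p..1, f (x - p) := by
        apply integral_congr
        intro x hx
        rw [uIcc_of_le (by linarith)] at hx
        obtain ⟨h1, h2⟩ := hx
        show f (circleDist x p) = f (x - p)
        simp only [circleDist]
        rw [abs_of_nonneg (by linarith), min_eq_left (by linarith)]
      rw [this, integral_comp_sub_right f p, sub_self]
    have e3 := integral_add_adjacent_intervals (fII 0 (1 - p)) (fII (1 - p) (1/2))
    rw [← e2, ← e1, pc1, pc2, pc3]
    linarith



/-- antiderivative of `x * log x` -/
lemma hd_xlogx {x : ℝ} (hx : 0 < x) :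
    HasDerivAt (fun v : ℝ => v^2/2*Real.log v - v^2/4) (x*Real.log x) x := by
  have h1 : HasDerivAt (fun v : ℝ => v^2/2) x x := by
    have := (hasDerivAt_pow 2 x).div_const 2
    refine this.congr_deriv ?_
    push_cast; ring
  have h2 := h1.mul (Real.hasDerivAt_log hx.ne')
  have h3 : HasDerivAt (fun v : ℝ => v^2/4) (x/2) x := by
    have := (hasDerivAt_pow 2 x).div_const 4
    refine this.congr_deriv ?_
    push_cast; ring
  have h4 := h2.sub h3
  refine h4.congr_deriv ?_
  field_simp
  ring

/-- antiderivative of `log x` -/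
lemma hd_logx {x : ℝ} (hx : 0 < x) :
    HasDerivAt (fun v : ℝ => v*Real.log v - v) (Real.log x) x := by
  have h2 := (hasDerivAt_id x).mul (Real.hasDerivAt_log hx.ne')
  have h4 := h2.sub (hasDerivAt_id x)
  refine h4.congr_deriv ?_
  field_simp
  simp

/-- antiderivative of `-(x log x)` -/
lemma hd_theta {x : ℝ} (hx : 0 < x) :
    HasDerivAt (fun u : ℝ => u^2/4 - u^2*Real.log u/2) (-(x*Real.log x)) x := by
  have h1 : HasDerivAt (fun v : ℝ => v^2/4) (x/2) x := by
    have := (hasDerivAt_pow 2 x).div_const 4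
    refine this.congr_deriv ?_
    push_cast; ring
  have h2 := ((hasDerivAt_pow 2 x).mul (Real.hasDerivAt_log hx.ne')).div_const 2
  have h4 := h1.sub h2
  refine h4.congr_deriv ?_
  field_simp
  ring

lemma innerA {ε s : ℝ} (hε0 : 0 < ε) (hs0 : 0 ≤ s) (hsε : s < ε) :
    ∫ t in (0:ℝ)..ε, score ε s t
      = s + 2*Real.log 2*(ε - s) + (ε - s)*Real.log (ε - s)
        - (ε - s)*Real.log (2*ε - s) := by
  have hes : 0 < ε - s := sub_pos.mpr hsε
  have p1 : ∫ t in (0:ℝ)..s, score ε s t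
      = s + (ε - s)*Real.log (2*ε - s - s) - (0 + (ε - s)*Real.log (2*ε - s - 0)) := by
    have step : ∫ t in (0:ℝ)..s, score ε s t
        = ∫ t in (0:ℝ)..s, (ε - t)/(2*ε - s - t) := by
      rw [integral_of_le hs0, integral_of_le hs0,
        integral_Ioc_eq_integral_Ioo, integral_Ioc_eq_integral_Ioo]
      apply setIntegral_congr_fun measurableSet_Ioo
      intro t ht
      obtain ⟨h1, h2⟩ := ht
      show score ε s t = (ε - t)/(2*ε - s - t)
      rw [score, if_neg (by push_neg; linarith), if_pos h2, dF,
        Gl_eq hε0 (by linarith), Gl_eq hε0 hsε.le]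
      have hden : 0 < (1 - t/ε) + (1 - s/ε) := by
        have ht' := (div_lt_one hε0).mpr (lt_trans h2 hsε)
        have hs' := (div_lt_one hε0).mpr hsε
        linarith
      rw [if_neg hden.ne']
      have h2d : (0:ℝ) < 2*ε - s - t := by linarith
      rw [div_eq_div_iff hden.ne' h2d.ne']
      field_simp
      ring
    rw [step]
    have hderiv : ∀ t ∈ uIcc (0:ℝ) s,
        HasDerivAt (fun u : ℝ => u + (ε - s)*Real.log (2*ε - s - u))
          ((ε - t)/(2*ε - s - t)) t := by
      intro t ht
      rw [uIcc_of_le hs0] at ht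
      have hpos : 0 < 2*ε - s - t := by
        have := ht.2; linarith
      have hu : HasDerivAt (fun u : ℝ => 2*ε - s - u) (-1) t := by
        simpa using (hasDerivAt_id t).const_sub (2*ε - s)
      have hlog : HasDerivAt (fun u : ℝ => Real.log (2*ε - s - u))
          ((2*ε - s - t)⁻¹ * (-1)) t :=
        (Real.hasDerivAt_log hpos.ne').comp t hu
      have h := (hasDerivAt_id t).add (hlog.const_mul (ε - s))
      refine h.congr_deriv ?_
      linear_combination -(mul_inv_cancel₀ hpos.ne')
    have hint : IntervalIntegrable (fun t => (ε - t)/(2*ε - s - t)) volume 0 s := by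
      apply ContinuousOn.intervalIntegrable
      apply ContinuousOn.div
      · exact (continuous_const.sub continuous_id).continuousOn
      · exact (continuous_const.sub continuous_id).continuousOn
      · intro t ht
        rw [uIcc_of_le hs0] at ht
        have h2' := ht.2
        have : (0:ℝ) < 2*ε - s - t := by linarith
        exact this.ne'
    simpa using integral_eq_sub_of_hasDerivAt hderiv hint
  have p2 : ∫ t in s..ε, score ε s t
      = -((ε - s)*Real.log (2*ε - s - ε)) - (-((ε - s)*Real.log (2*ε - s - s))) := by
    have step : ∫ t in s..ε, score ε s t
        = ∫ t in s..ε, (ε - s)/(2*ε - s - t) := by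
      rw [integral_of_le hsε.le, integral_of_le hsε.le]
      apply setIntegral_congr_fun measurableSet_Ioc
      intro t ht
      obtain ⟨h1, h2⟩ := ht
      show score ε s t = (ε - s)/(2*ε - s - t)
      rw [score, if_pos h1, dF, Gl_eq hε0 hsε.le, Gl_eq hε0 h2]
      have hs' := (div_lt_one hε0).mpr hsε
      have ht' := (div_le_one hε0).mpr h2
      have hden : 0 < (1 - s/ε) + (1 - t/ε) := by linarith
      rw [if_neg hden.ne']
      have h2d : (0:ℝ) < 2*ε - s - t := by linarith
      rw [div_eq_div_iff hden.ne' h2d.ne']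
      field_simp
      ring
    rw [step]
    have hderiv : ∀ t ∈ uIcc s ε,
        HasDerivAt (fun u : ℝ => -((ε - s)*Real.log (2*ε - s - u)))
          ((ε - s)/(2*ε - s - t)) t := by
      intro t ht
      rw [uIcc_of_le hsε.le] at ht
      have hpos : 0 < 2*ε - s - t := by
        have := ht.2; linarith
      have hu : HasDerivAt (fun u : ℝ => 2*ε - s - u) (-1) t := by
        simpa using (hasDerivAt_id t).const_sub (2*ε - s)
      have hlog : HasDerivAt (fun u : ℝ => Real.log (2*ε - s - u))
          ((2*ε - s - t)⁻¹ * (-1)) t :=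
        (Real.hasDerivAt_log hpos.ne').comp t hu
      have h := (hlog.const_mul (ε - s)).neg
      refine h.congr_deriv ?_
      field_simp
    have hint : IntervalIntegrable (fun t => (ε - s)/(2*ε - s - t)) volume s ε := by
      apply ContinuousOn.intervalIntegrable
      apply ContinuousOn.div
      · exact continuousOn_const
      · exact (continuous_const.sub continuous_id).continuousOn
      · intro t ht
        rw [uIcc_of_le hsε.le] at ht
        have h2' := ht.2
        have : (0:ℝ) < 2*ε - s - t := by linarith
        exact this.ne'
    simpa using integral_eq_sub_of_hasDerivAt hderiv hint
  have hsplit := integral_add_adjacent_intervals (score_ii ε s 0 s) (score_ii ε s s ε)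
  rw [← hsplit, p1, p2]
  have e1 : 2*ε - s - s = 2*(ε - s) := by ring
  have e2 : 2*ε - s - ε = ε - s := by ring
  have e3 : 2*ε - s - 0 = 2*ε - s := by ring
  rw [e1, e2, e3, Real.log_mul (by norm_num) hes.ne']
  ring



lemma innerA2 {ε s : ℝ} (hε0 : 0 < ε) (hε : ε ≤ 1/2) (hs0 : 0 ≤ s) (hsε : s < ε) :
    ∫ t in ε..(1/2:ℝ), score ε s t = 1/2 - ε := by
  have heq : EqOn (score ε s) (fun _ => (1:ℝ)) (uIcc ε (1/2)) := by
    intro t ht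
    rw [uIcc_of_le hε] at ht
    obtain ⟨h1, h2⟩ := ht
    show score ε s t = 1
    rw [score, if_pos (lt_of_lt_of_le hsε h1), dF, Gl_eq_zero hε0 h1, add_zero]
    have hpos := Gl_pos hε0 hs0 hsε
    rw [if_neg hpos.ne']
    exact div_self hpos.ne'
  rw [integral_congr heq]
  simp

noncomputable def innerT (ε s : ℝ) : ℝ := ∫ t in (0:ℝ)..(1/2:ℝ), score ε s t

lemma innerT_lt {ε s : ℝ} (hε0 : 0 < ε) (hε : ε ≤ 1/2) (hs0 : 0 ≤ s) (hsε : s < ε) :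
    innerT ε s = s + 2*Real.log 2*(ε - s) + (ε - s)*Real.log (ε - s)
      - (ε - s)*Real.log (2*ε - s) + (1/2 - ε) := by
  have hsplit := integral_add_adjacent_intervals (score_ii ε s 0 ε) (score_ii ε s ε (1/2))
  rw [innerT, ← hsplit, innerA hε0 hs0 hsε, innerA2 hε0 hε hs0 hsε]

lemma innerT_gt {ε s : ℝ} (hε0 : 0 < ε) (hε : ε ≤ 1/2) (hsε : ε < s) (hs2 : s ≤ 1/2) :
    innerT ε s = ε + (1/2 - ε)/2 := by
  have p1 : ∫ t in (0:ℝ)..ε, score ε s t = ε := by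
    rw [integral_of_le hε0.le, integral_Ioc_eq_integral_Ioo,
      setIntegral_congr_fun measurableSet_Ioo (g := fun _ => (1:ℝ)) ?_]
    · simp [Real.volume_Ioo, ENNReal.toReal_ofReal hε0.le, hε0.le]
    · intro t ht
      obtain ⟨h1, h2⟩ := ht
      show score ε s t = 1
      have hts : t < s := lt_trans h2 hsε
      rw [score, if_neg (not_lt.mpr hts.le), if_pos hts, dF, Gl_eq_zero hε0 hsε.le, add_zero]
      have hpos := Gl_pos hε0 h1.le h2
      rw [if_neg hpos.ne']
      exact div_self hpos.ne'
  have p2 : ∫ t in ε..(1/2:ℝ), score ε s t = (1/2 - ε)/2 := by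
    have hae : ∀ᵐ t : ℝ, t ≠ s := by
      refine MeasureTheory.ae_iff.mpr ?_
      simp only [not_not, Set.setOf_eq_eq_singleton]
      exact Real.volume_singleton
    rw [integral_of_le hε,
      setIntegral_congr_ae measurableSet_Ioc
        (g := fun _ => (1/2:ℝ)) ?_]
    · rw [setIntegral_const, Real.volume_real_Ioc_of_le hε, smul_eq_mul]
      ring
    · filter_upwards [hae] with t hts hmem
      obtain ⟨h1, h2⟩ := hmem
      have g1 : Gl ε s = 0 := Gl_eq_zero hε0 hsε.le
      have g2 : Gl ε t = 0 := Gl_eq_zero hε0 h1.le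
      rcases lt_or_gt_of_ne hts with h | h
      · rw [score, if_neg (not_lt.mpr h.le), if_pos h, dF, g1, g2]
        norm_num
      · rw [score, if_pos h, dF, g1, g2]
        norm_num
  rw [innerT, ← integral_add_adjacent_intervals (score_ii ε s 0 ε) (score_ii ε s ε (1/2)), p1, p2]

lemma measurable_innerT (ε : ℝ) : Measurable (innerT ε) := by
  have h := ((measurable_score ε).stronglyMeasurable.integral_prod_right'
    (ν := volume.restrict (Ioc (0:ℝ) (1/2)))).measurable
  have e : innerT ε = fun s => ∫ t, score ε s t ∂(volume.restrict (Ioc (0:ℝ) (1/2))) := by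
    funext s
    rw [innerT, integral_of_le (by norm_num : (0:ℝ) ≤ 1/2)]
  rw [e]
  exact h

lemma innerT_norm (ε : ℝ) (s : ℝ) : ‖innerT ε s‖ ≤ 1 := by
  have h := intervalIntegral.norm_integral_le_of_norm_le_const (C := 1)
    (f := score ε s) (a := 0) (b := 1/2) (fun t _ => score_norm ε s t)
  rw [innerT]
  calc ‖∫ t in (0:ℝ)..(1/2:ℝ), score ε s t‖ ≤ 1 * |(1/2:ℝ) - 0| := h
  _ ≤ 1 := by rw [sub_zero, abs_of_nonneg (by norm_num : (0:ℝ) ≤ 1/2)]; norm_num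

lemma outer1 {ε : ℝ} (hε0 : 0 < ε) (hε : ε ≤ 1/2) :
    ∫ s in (0:ℝ)..ε, innerT ε s = Real.log 2 * ε^2 + ε/2 - ε^2 := by
  have hstep : ∫ s in (0:ℝ)..ε, innerT ε s
      = ∫ s in (0:ℝ)..ε, (s + 2*Real.log 2*(ε - s) + (ε - s)*Real.log (ε - s)
          - (ε - s)*Real.log (2*ε - s) + (1/2 - ε)) := by
    rw [integral_of_le hε0.le, integral_of_le hε0.le,
      integral_Ioc_eq_integral_Ioo, integral_Ioc_eq_integral_Ioo]
    apply setIntegral_congr_fun measurableSet_Ioo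
    intro s hs
    exact innerT_lt hε0 hε hs.1.le hs.2
  rw [hstep]
  have hc2 : Continuous fun u : ℝ => u^2*Real.log u := by
    have e : (fun u : ℝ => u^2*Real.log u) = fun u => u * (u*Real.log u) := by
      funext u; ring
    rw [e]
    exact continuous_id.mul Real.continuous_mul_log
  have hA : Continuous fun s : ℝ => (ε - s)^2*Real.log (ε - s) := by
    exact hc2.comp (continuous_const.sub continuous_id)
  have hB : Continuous fun s : ℝ => (ε - s)*Real.log (ε - s) := by
    exact Real.continuous_mul_log.comp (continuous_const.sub continuous_id)
  have hlogc : ContinuousOn (fun s : ℝ => Real.log (2*ε - s)) (Icc 0 ε) := by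
    apply ContinuousOn.log
    · exact (continuous_const.sub continuous_id).continuousOn
    · intro s hs
      have := hs.2
      have hp : (0:ℝ) < 2*ε - s := by linarith
      exact hp.ne'
  have key := integral_eq_sub_of_hasDerivAt_of_le (f := fun s : ℝ =>
      s^2/2 + 2*Real.log 2*(ε*s - s^2/2) + ((ε - s)^2/4 - (ε - s)^2*Real.log (ε - s)/2)
        + ((2*ε - s)^2/2*Real.log (2*ε - s) - (2*ε - s)^2/4
            - ε*((2*ε - s)*Real.log (2*ε - s) - (2*ε - s)))
        + (1/2 - ε)*s)
      (f' := fun s : ℝ => s + 2*Real.log 2*(ε - s) + (ε - s)*Real.log (ε - s)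
          - (ε - s)*Real.log (2*ε - s) + (1/2 - ε))
      hε0.le ?_ ?_ ?_
  · rw [key]
    simp only [sub_self, sub_zero, Real.log_zero]
    rw [(by ring : 2*ε - ε = ε), Real.log_mul (by norm_num : (2:ℝ) ≠ 0) hε0.ne']
    ring
  · -- continuity
    have hq : ContinuousOn (fun s : ℝ => 2*ε - s) (Icc 0 ε) :=
      (continuous_const.sub continuous_id).continuousOn
    have c1 : Continuous fun s : ℝ => s^2/2 + 2*Real.log 2*(ε*s - s^2/2) := by
      fun_prop
    have c3 : Continuous fun s : ℝ => (ε - s)^2/4 - (ε - s)^2*Real.log (ε - s)/2 := by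
      apply Continuous.sub
      · fun_prop
      · exact hA.div_const 2
    have c4 : ContinuousOn (fun s : ℝ => (2*ε - s)^2/2*Real.log (2*ε - s) - (2*ε - s)^2/4
        - ε*((2*ε - s)*Real.log (2*ε - s) - (2*ε - s))) (Icc 0 ε) := by
      exact ((((hq.pow 2).div_const 2).mul hlogc).sub ((hq.pow 2).div_const 4)).sub
        (continuousOn_const.mul ((hq.mul hlogc).sub hq))
    have c5 : Continuous fun s : ℝ => (1/2 - ε)*s := continuous_const.mul continuous_id
    exact (((c1.continuousOn.add c3.continuousOn).add c4).add c5.continuousOn)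
  · -- derivative
    intro s hs
    obtain ⟨h1, h2⟩ := hs
    have he1 : (0:ℝ) < ε - s := by linarith
    have he2 : (0:ℝ) < 2*ε - s := by linarith
    have hu : HasDerivAt (fun u : ℝ => ε - u) (-1) s := by
      simpa using (hasDerivAt_id s).const_sub ε
    have hv : HasDerivAt (fun u : ℝ => 2*ε - u) (-1) s := by
      simpa using (hasDerivAt_id s).const_sub (2*ε)
    have P1 : HasDerivAt (fun u : ℝ => u^2/2) s s := by
      have := (hasDerivAt_pow 2 s).div_const 2
      refine this.congr_deriv ?_
      push_cast; ring
    have P2 : HasDerivAt (fun u : ℝ => 2*Real.log 2*(ε*u - u^2/2)) (2*Real.log 2*(ε - s)) s := by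
      have ha : HasDerivAt (fun u : ℝ => ε*u) ε s := by
        simpa using (hasDerivAt_id s).const_mul ε
      exact (ha.sub P1).const_mul (2*Real.log 2)
    have P3 : HasDerivAt (fun u : ℝ => (ε - u)^2/4 - (ε - u)^2*Real.log (ε - u)/2)
        ((ε - s)*Real.log (ε - s)) s := by
      have h := (hd_theta he1).comp s hu
      simpa [Function.comp_def] using h
    have P4a : HasDerivAt (fun u : ℝ => (2*ε - u)^2/2*Real.log (2*ε - u) - (2*ε - u)^2/4)
        (-((2*ε - s)*Real.log (2*ε - s))) s := by
      have h := (hd_xlogx he2).comp s hv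
      simpa [Function.comp_def] using h
    have P4b : HasDerivAt (fun u : ℝ => ε*((2*ε - u)*Real.log (2*ε - u) - (2*ε - u)))
        (ε*(-Real.log (2*ε - s))) s := by
      have h : HasDerivAt (fun u : ℝ => (2*ε - u)*Real.log (2*ε - u) - (2*ε - u))
          (-Real.log (2*ε - s)) s := by
        have h0 := (hd_logx he2).comp s hv
        simpa [Function.comp_def] using h0
      exact h.const_mul ε
    have P5 : HasDerivAt (fun u : ℝ => (1/2 - ε)*u) (1/2 - ε) s := by
      simpa using (hasDerivAt_id s).const_mul (1/2 - ε)
    have H := ((((P1.add P2).add P3).add (P4a.sub P4b)).add P5)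
    refine H.congr_deriv ?_
    ring
  · -- integrability of f'
    apply ContinuousOn.intervalIntegrable
    rw [uIcc_of_le hε0.le]
    have hCc : ContinuousOn (fun s : ℝ => (ε - s)*Real.log (2*ε - s)) (Icc 0 ε) :=
      (continuous_const.sub continuous_id).continuousOn.mul hlogc
    exact ((((continuous_id.continuousOn.add
      (continuous_const.mul (continuous_const.sub continuous_id)).continuousOn).add
        hB.continuousOn).sub hCc).add continuousOn_const)

lemma outer2 {ε : ℝ} (hε0 : 0 < ε) (hε : ε ≤ 1/2) :
    ∫ s in ε..(1/2:ℝ), innerT ε s = (1/2 - ε)*(ε + (1/2 - ε)/2) := by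
  rw [integral_of_le hε,
    setIntegral_congr_fun measurableSet_Ioc
      (g := fun _ => ε + (1/2 - ε)/2) (fun s hs => innerT_gt hε0 hε hs.1 hs.2),
    setIntegral_const, Real.volume_real_Ioc_of_le hε, smul_eq_mul]

lemma mainJ {ε : ℝ} (hε0 : 0 < ε) (hε : ε ≤ 1/2) :
    ∫ s in (0:ℝ)..(1/2:ℝ), innerT ε s
      = Real.log 2 * ε^2 + ε/2 - ε^2 + (1/2 - ε)*(ε + (1/2 - ε)/2) := by
  have hii : ∀ a b : ℝ, IntervalIntegrable (innerT ε) volume a b :=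
    bdd_ii (measurable_innerT ε) (innerT_norm ε)
  rw [← integral_add_adjacent_intervals (hii 0 ε) (hii ε (1/2)), outer1 hε0 hε, outer2 hε0 hε]

theorem stmt16 (ε : ℝ) (hε0 : 0 < ε) (hε : ε ≤ 1/2) (b : ℝ) (hb : b = 2 * ε) :
    ∫ p in Set.Ico (0:ℝ) 1, ∫ x₁ in Set.Ico (0:ℝ) 1, ∫ x₂ in Set.Ico (0:ℝ) 1,
        simSucc ε x₁ x₂ p
      = 1/2 + b - (3/2 - Real.log 2) * b ^ 2 := by
  have hJ := mainJ hε0 hε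
  have hmain : ∀ p ∈ Ico (0:ℝ) 1,
      (∫ x₁ in Ico (0:ℝ) 1, ∫ x₂ in Ico (0:ℝ) 1, simSucc ε x₁ x₂ p)
        = 4 * (Real.log 2 * ε^2 + ε/2 - ε^2 + (1/2 - ε)*(ε + (1/2 - ε)/2)) := by
    intro p hp
    have inner_eq : ∀ x₁ : ℝ, (∫ x₂ in Ico (0:ℝ) 1, simSucc ε x₁ x₂ p)
        = 2 * innerT ε (circleDist x₁ p) := by
      intro x₁
      exact circle_subst hp.1 hp.2 (f := fun d => score ε (circleDist x₁ p) d)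
        (measurable_score_right ε _) (fun t => score_norm ε _ t)
    simp only [inner_eq]
    rw [MeasureTheory.integral_const_mul,
      circle_subst hp.1 hp.2 (f := innerT ε) (measurable_innerT ε) (innerT_norm ε)]
    rw [show (∫ t in (0:ℝ)..(1/2:ℝ), innerT ε t)
        = Real.log 2 * ε^2 + ε/2 - ε^2 + (1/2 - ε)*(ε + (1/2 - ε)/2) from hJ]
    ring
  rw [setIntegral_congr_fun measurableSet_Ico hmain]
  rw [setIntegral_const, Real.volume_real_Ico_of_le (by norm_num), sub_zero,
    one_smul]
  rw [hb]
  ring
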